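/- arXiv:2411.11876 — 2 statements merged into one kernel-verified Lean document; each statement's English description precedes it below -/
import Mathlib

section
/- Let T be a left continuous t-norm on [0,1] and L a right continuous L-operation on [0,∞]. If (L⊗T)(f,g) is continuous on (0,∞] whenever f is a d.d.f. continuous on (0,∞] and g is a continuous d.d.f., then T is a continuous t-norm. -/
open ENNReal Set

/-- A distance distribution function: increasing `f : [0,∞] → [0,1]` with
`f 0 = 0`, `f ∞ = 1`, left continuous on `(0,∞)`. -/
def IsDDF (f : ℝ≥0∞ → ℝ≥0∞) : Prop :=
  Monotone f ∧ (∀ x, f x ≤ 1) ∧ f 0 = 0 ∧ f ⊤ = 1 ∧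
    ∀ x : ℝ≥0∞, 0 < x → x < ⊤ → f x = ⨆ y ∈ Set.Iio x, f y

/-- The largest quasi-inverse `f∨ y = inf {x | f x > y}`. -/
noncomputable def qInv (f : ℝ≥0∞ → ℝ≥0∞) : ℝ≥0∞ → ℝ≥0∞ :=
  fun y => sInf {x | y < f x}

/-- The unit interval `[0,1]` inside `[0,∞]`. -/
def I01 : Set ℝ≥0∞ := Set.Icc 0 1

/-- A left continuous t-norm on `[0,1]`: commutative, associative, increasing in each
place, identity `1`, left continuous in each variable. -/
def IsLeftContTNorm (T : ℝ≥0∞ → ℝ≥0∞ → ℝ≥0∞) : Prop :=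
  (∀ p ∈ I01, ∀ q ∈ I01, T p q ∈ I01) ∧
  (∀ p ∈ I01, ∀ q ∈ I01, T p q = T q p) ∧
  (∀ p ∈ I01, ∀ q ∈ I01, ∀ r ∈ I01, T (T p q) r = T p (T q r)) ∧
  (∀ p ∈ I01, T p 1 = p) ∧
  (∀ q ∈ I01, ∀ p₁ ∈ I01, ∀ p₂ ∈ I01, p₁ ≤ p₂ → T p₁ q ≤ T p₂ q) ∧
  (∀ q ∈ I01, ∀ p ∈ I01, 0 < p → T p q = ⨆ p' ∈ Set.Iio p, T p' q)

/-- A right continuous `L`-operation on `[0,∞]`: commutative, associative, increasing in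
each place, identity `0`, right continuous in each variable. -/
def IsRightContLOp (L : ℝ≥0∞ → ℝ≥0∞ → ℝ≥0∞) : Prop :=
  (∀ x y, L x y = L y x) ∧
  (∀ x y z, L (L x y) z = L x (L y z)) ∧
  (∀ x, L x 0 = x) ∧
  (∀ y x₁ x₂, x₁ ≤ x₂ → L x₁ y ≤ L x₂ y) ∧
  (∀ y x, x < ⊤ → L x y = ⨅ x' ∈ Set.Ioi x, L x' y)

/-- Joint continuity of a t-norm on `[0,1] × [0,1]`. -/
def TNormContinuous (T : ℝ≥0∞ → ℝ≥0∞ → ℝ≥0∞) : Prop :=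
  ContinuousOn (fun pq : ℝ≥0∞ × ℝ≥0∞ => T pq.1 pq.2) (I01 ×ˢ I01)

/-- The tensor-product triangle function:
`(L ⊗ T)(f,g)(x) = sup {T (f r) (g s) | L r s < x}` for `x < ∞`, and `1` at `∞`. -/
noncomputable def tensor (L T : ℝ≥0∞ → ℝ≥0∞ → ℝ≥0∞) (f g : ℝ≥0∞ → ℝ≥0∞) :
    ℝ≥0∞ → ℝ≥0∞ :=
  fun x => if x = ⊤ then 1 else ⨆ r, ⨆ s, ⨆ _ : L r s < x, T (f r) (g s)

/-! ### Auxiliary material -/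

section Aux

variable {T L : ℝ≥0∞ → ℝ≥0∞ → ℝ≥0∞}

lemma mem_I01 {x : ℝ≥0∞} (hx : x ≤ 1) : x ∈ I01 := ⟨zero_le, hx⟩

lemma t_comm (hT : IsLeftContTNorm T) {x y : ℝ≥0∞} (hx : x ≤ 1) (hy : y ≤ 1) :
    T x y = T y x :=
  hT.2.1 x (mem_I01 hx) y (mem_I01 hy)

lemma t_mono_left (hT : IsLeftContTNorm T) {q x y : ℝ≥0∞} (hq : q ≤ 1) (hx : x ≤ 1)
    (hy : y ≤ 1) (hxy : x ≤ y) : T x q ≤ T y q :=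
  hT.2.2.2.2.1 q (mem_I01 hq) x (mem_I01 hx) y (mem_I01 hy) hxy

lemma t_mono_right (hT : IsLeftContTNorm T) {p x y : ℝ≥0∞} (hp : p ≤ 1) (hx : x ≤ 1)
    (hy : y ≤ 1) (hxy : x ≤ y) : T p x ≤ T p y := by
  rw [t_comm hT hp hx, t_comm hT hp hy]
  exact t_mono_left hT hp hx hy hxy

lemma t_le_left (hT : IsLeftContTNorm T) {x y : ℝ≥0∞} (hx : x ≤ 1) (hy : y ≤ 1) :
    T x y ≤ x := by
  have h1 : T x y ≤ T x 1 := t_mono_right hT hx hy le_rfl hy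
  rwa [hT.2.2.2.1 x (mem_I01 hx)] at h1

lemma t_le_right (hT : IsLeftContTNorm T) {x y : ℝ≥0∞} (hx : x ≤ 1) (hy : y ≤ 1) :
    T x y ≤ y := by
  rw [t_comm hT hx hy]; exact t_le_left hT hy hx

lemma l_left_le (hL : IsRightContLOp L) (r s : ℝ≥0∞) : r ≤ L r s := by
  have h : L 0 r ≤ L s r := hL.2.2.2.1 r 0 s (zero_le)
  rw [hL.1 0 r, hL.2.2.1 r, hL.1 s r] at h
  exact h

lemma l_right_le (hL : IsRightContLOp L) (r s : ℝ≥0∞) : s ≤ L r s := by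
  rw [hL.1 r s]; exact l_left_le hL s r

lemma exists_small (hL : IsRightContLOp L) {s x : ℝ≥0∞} (hs : s < x) :
    ∃ r, 0 < r ∧ r ≤ 1 ∧ L r s < x := by
  have h0 : L 0 s = s := by rw [hL.1 0 s]; exact hL.2.2.1 s
  have hrc := hL.2.2.2.2 s 0 (by simp)
  have hlt : ⨅ r ∈ Set.Ioi (0 : ℝ≥0∞), L r s < x := by
    rw [← hrc, h0]; exact hs
  rw [iInf_lt_iff] at hlt
  obtain ⟨r, hr⟩ := hlt
  rw [iInf_lt_iff] at hr
  obtain ⟨hr0, hrs⟩ := hr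
  refine ⟨min r 1, lt_min hr0 one_pos, min_le_right _ _, ?_⟩
  exact lt_of_le_of_lt (hL.2.2.2.1 s _ _ (min_le_left _ _)) hrs

/-- The auxiliary d.d.f. with a jump at `0` to level `p`, plateau on `(0,1]`, then rising
to `1`. -/
noncomputable def Fp (p : ℝ≥0∞) : ℝ≥0∞ → ℝ≥0∞ :=
  fun r => if r = 0 then 0 else min 1 (p + (r - 1))

/-- The auxiliary continuous d.d.f. `min · 1`. -/
noncomputable def G0 : ℝ≥0∞ → ℝ≥0∞ := fun s => min s 1

lemma Fp_eq_p {p : ℝ≥0∞} (hp : p ≤ 1) {r : ℝ≥0∞} (h0 : 0 < r) (h1 : r ≤ 1) :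
    Fp p r = p := by
  rw [Fp, if_neg h0.ne', tsub_eq_zero_of_le h1, add_zero, min_eq_right hp]

lemma Fp_le_p {p : ℝ≥0∞} (hp : p ≤ 1) {r : ℝ≥0∞} (h1 : r ≤ 1) : Fp p r ≤ p := by
  by_cases h0 : r = 0
  · simp [Fp, h0]
  · exact le_of_eq (Fp_eq_p hp (pos_iff_ne_zero.2 h0) h1)

lemma Fp_le_one (p : ℝ≥0∞) (r : ℝ≥0∞) : Fp p r ≤ 1 := by
  rw [Fp]; split
  · exact zero_le
  · exact min_le_left _ _

lemma Fp_mono (p : ℝ≥0∞) : Monotone (Fp p) := by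
  intro a b hab
  by_cases ha : a = 0
  · simp [Fp, ha]
  · have hb : b ≠ 0 := fun hb => ha (le_antisymm (hb ▸ hab) (zero_le))
    simp only [Fp, if_neg ha, if_neg hb]
    exact min_le_min le_rfl (add_le_add le_rfl (tsub_le_tsub_right hab 1))

lemma isDDF_Fp {p : ℝ≥0∞} (hp : p ≤ 1) : IsDDF (Fp p) := by
  refine ⟨Fp_mono p, Fp_le_one p, by simp [Fp], ?_, ?_⟩
  · have ht : (⊤ : ℝ≥0∞) - 1 = ⊤ := by simp
    rw [Fp, if_neg (by simp : (⊤:ℝ≥0∞) ≠ 0), ht, add_top, min_eq_left le_top]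
  · intro x hx0 hxt
    apply le_antisymm
    · -- `Fp p x ≤ ⨆ y ∈ Iio x, Fp p y`
      refine le_of_forall_lt fun c hc => ?_
      by_cases hx1 : x ≤ 1
      · rw [Fp_eq_p hp hx0 hx1] at hc
        obtain ⟨y, hy0, hyx⟩ := exists_between hx0
        have : Fp p y = p := Fp_eq_p hp hy0 (hyx.le.trans hx1)
        calc c < p := hc
          _ = Fp p y := this.symm
          _ ≤ ⨆ y ∈ Set.Iio x, Fp p y := le_iSup₂_of_le y hyx le_rfl
      · push_neg at hx1
        rw [Fp, if_neg hx0.ne', lt_min_iff] at hc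
        obtain ⟨hc1, hc2⟩ := hc
        by_cases hcp : c < p
        · have h1 : Fp p 1 = p := Fp_eq_p hp one_pos le_rfl
          calc c < p := hcp
            _ = Fp p 1 := h1.symm
            _ ≤ ⨆ y ∈ Set.Iio x, Fp p y := le_iSup₂_of_le 1 hx1 le_rfl
        · push_neg at hcp
          have hpt : p ≠ ⊤ := (hp.trans_lt one_lt_top).ne
          have hct : c ≠ ⊤ := (hc1.trans ENNReal.one_lt_top).ne
          have hd : c - p < x - 1 := by
            refine ENNReal.sub_lt_of_lt_add hcp ?_
            rwa [add_comm] at hc2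
          obtain ⟨e, he1, he2⟩ := exists_between hd
          have hy : 1 + e < x := by
            calc 1 + e < 1 + (x - 1) := by
                  exact ENNReal.add_lt_add_left one_ne_top he2
              _ = x := add_tsub_cancel_of_le hx1.le
          have hyval : Fp p (1 + e) = min 1 (p + e) := by
            rw [Fp, if_neg (lt_of_lt_of_le zero_lt_one le_self_add).ne', ENNReal.add_sub_cancel_left one_ne_top]
          have hce : c < p + e := by
            calc c = p + (c - p) := (add_tsub_cancel_of_le hcp).symm
              _ < p + e := by
                  exact ENNReal.add_lt_add_left hpt he1
          calc c < min 1 (p + e) := lt_min hc1 hce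
            _ = Fp p (1 + e) := hyval.symm
            _ ≤ ⨆ y ∈ Set.Iio x, Fp p y := le_iSup₂_of_le (1 + e) hy le_rfl
    · exact iSup₂_le fun y hy => Fp_mono p (le_of_lt hy)

lemma Fp_contOn (p : ℝ≥0∞) : ContinuousOn (Fp p) (Set.Ioi 0) := by
  have hc : Continuous fun r : ℝ≥0∞ => min 1 (p + (r - 1)) :=
    continuous_const.min (continuous_const.add (ENNReal.continuous_sub_right 1))
  refine hc.continuousOn.congr fun r hr => ?_
  rw [Fp, if_neg (ne_of_gt hr)]

lemma isDDF_G0 : IsDDF G0 := by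
  refine ⟨fun a b hab => min_le_min hab le_rfl, fun x => min_le_right _ _, by simp [G0],
    by simp [G0], ?_⟩
  intro x hx0 hxt
  apply le_antisymm
  · refine le_of_forall_lt fun c hc => ?_
    rw [G0, lt_min_iff] at hc
    obtain ⟨y, hy1, hy2⟩ := exists_between hc.1
    calc c < min y 1 := lt_min hy1 hc.2
      _ = G0 y := rfl
      _ ≤ ⨆ y ∈ Set.Iio x, G0 y := le_iSup₂_of_le y hy2 le_rfl
  · exact iSup₂_le fun y hy => min_le_min (le_of_lt hy) le_rfl

lemma G0_cont : Continuous G0 := continuous_id.min continuous_const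

/-- The key computation: on `(0,1]`, `(L ⊗ T)(Fp p, G0) x = T p x`. -/
lemma tensor_eq (hT : IsLeftContTNorm T) (hL : IsRightContLOp L) {p : ℝ≥0∞} (hp : p ≤ 1)
    {x : ℝ≥0∞} (hx0 : 0 < x) (hx1 : x ≤ 1) :
    tensor L T (Fp p) G0 x = T p x := by
  have hxt : x ≠ ⊤ := (hx1.trans_lt one_lt_top).ne
  rw [tensor]
  simp only [if_neg hxt]
  apply le_antisymm
  · refine iSup_le fun r => iSup_le fun s => iSup_le fun hrs => ?_
    have hr : r < x := lt_of_le_of_lt (l_left_le hL r s) hrs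
    have hs : s < x := lt_of_le_of_lt (l_right_le hL r s) hrs
    have hfr : Fp p r ≤ p := Fp_le_p hp (hr.le.trans hx1)
    have hgs : G0 s = s := min_eq_left (hs.le.trans hx1)
    have hs1 : s ≤ 1 := hs.le.trans hx1
    rw [hgs]
    calc T (Fp p r) s
        ≤ T p s := t_mono_left hT hs1 (Fp_le_one p r) hp hfr
      _ = T s p := t_comm hT hp hs1
      _ ≤ T x p := t_mono_left hT hp hs1 hx1 hs.le
      _ = T p x := t_comm hT hx1 hp
  · have hsup : T p x = ⨆ s ∈ Set.Iio x, T s p := by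
      rw [t_comm hT hp hx1]
      exact hT.2.2.2.2.2 p (mem_I01 hp) x (mem_I01 hx1) hx0
    rw [hsup]
    refine iSup_le fun s => iSup_le fun hsx => ?_
    have hsx' : s < x := hsx
    obtain ⟨r, hr0, hr1, hrs⟩ := exists_small hL hsx'
    have hfr : Fp p r = p := Fp_eq_p hp hr0 hr1
    have hgs : G0 s = s := min_eq_left (hsx'.le.trans hx1)
    have heq : T s p = T (Fp p r) (G0 s) := by
      rw [hfr, hgs, t_comm hT (hsx'.le.trans hx1) hp]
    rw [heq]
    exact le_iSup_of_le r (le_iSup_of_le s (le_iSup_of_le hrs le_rfl))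

/-- Lower (left) approximation: values of `T` stay above `a` near and above `(p,q)`. -/
lemma approx_left (hT : IsLeftContTNorm T) {p q a : ℝ≥0∞} (hp : p ∈ I01) (hq : q ∈ I01)
    (ha : a < T p q) :
    ∃ l m, l < p ∧ m < q ∧ ∀ x ∈ I01, ∀ y ∈ I01, l < x → m < y → a < T x y := by
  have hap : a < p := ha.trans_le (t_le_left hT hp.2 hq.2)
  have haq : a < q := ha.trans_le (t_le_right hT hp.2 hq.2)
  have hp0 : 0 < p := lt_of_le_of_lt (zero_le) hap
  have hq0 : 0 < q := lt_of_le_of_lt (zero_le) haq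
  have hsup := hT.2.2.2.2.2 q hq p hp hp0
  rw [hsup] at ha
  simp only [lt_iSup_iff] at ha
  obtain ⟨p₁, hp₁p, ha₁⟩ := ha
  have hp₁1 : p₁ ≤ 1 := (le_of_lt hp₁p).trans hp.2
  rw [t_comm hT hp₁1 hq.2] at ha₁
  have hsup2 := hT.2.2.2.2.2 p₁ (mem_I01 hp₁1) q hq hq0
  rw [hsup2] at ha₁
  simp only [lt_iSup_iff] at ha₁
  obtain ⟨q₁, hq₁q, ha₂⟩ := ha₁
  have hq₁1 : q₁ ≤ 1 := (le_of_lt hq₁q).trans hq.2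
  refine ⟨p₁, q₁, hp₁p, hq₁q, fun x hx y hy hlx hmy => ?_⟩
  calc a < T q₁ p₁ := ha₂
    _ ≤ T y p₁ := t_mono_left hT hp₁1 hq₁1 hy.2 hmy.le
    _ = T p₁ y := t_comm hT hy.2 hp₁1
    _ ≤ T x y := t_mono_left hT hy.2 hp₁1 hx.2 hlx.le

/-- Upper (right) approximation, using the right-continuity of the slices obtained
from the continuity-preservation hypothesis. -/
lemma approx_right (hT : IsLeftContTNorm T)
    (hslice : ∀ p : ℝ≥0∞, p ≤ 1 → ContinuousOn (fun x => T p x) (Set.Ioc 0 1))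
    {p q b : ℝ≥0∞} (hp : p ∈ I01) (hq : q ∈ I01) (hb : T p q < b) :
    ∃ u v, p < u ∧ q < v ∧ ∀ x ∈ I01, ∀ y ∈ I01, x < u → y < v → T x y < b := by
  by_cases hc1 : q = 1 ∨ p = 0
  · refine ⟨b, ⊤, ?_, hq.2.trans_lt one_lt_top, fun x hx y hy hxu _ =>
      (t_le_left hT hx.2 hy.2).trans_lt hxu⟩
    rcases hc1 with rfl | rfl
    · rwa [hT.2.2.2.1 p hp] at hb
    · exact lt_of_le_of_lt (zero_le) hb
  by_cases hc2 : p = 1 ∨ q = 0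
  · refine ⟨⊤, b, hp.2.trans_lt one_lt_top, ?_, fun x hx y hy _ hyv =>
      (t_le_right hT hx.2 hy.2).trans_lt hyv⟩
    rcases hc2 with rfl | rfl
    · rwa [t_comm hT le_rfl hq.2, hT.2.2.2.1 q hq] at hb
    · exact lt_of_le_of_lt (zero_le) hb
  push_neg at hc1 hc2
  have hq1 : q < 1 := lt_of_le_of_ne hq.2 hc1.1
  have hp0 : 0 < p := pos_iff_ne_zero.2 hc1.2
  have hp1 : p < 1 := lt_of_le_of_ne hp.2 hc2.1
  have hq0 : 0 < q := pos_iff_ne_zero.2 hc2.2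
  obtain ⟨b₁, hb₁, hb₁b⟩ := exists_between hb
  -- first coordinate
  have hcw : ContinuousWithinAt (fun x => T q x) (Set.Ioc 0 1) p :=
    hslice q hq.2 p ⟨hp0, hp.2⟩
  have hval : T q p < b₁ := by rwa [t_comm hT hq.2 hp.2]
  have hev : ∀ᶠ x in nhdsWithin p (Set.Ioc 0 1), T q x < b₁ :=
    hcw.eventually_lt_const hval
  have hev2 : ∀ᶠ x in nhdsWithin p (Set.Ioc p 1), T q x < b₁ :=
    hev.filter_mono (nhdsWithin_mono p (Set.Ioc_subset_Ioc_left hp0.le))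
  have hne : (nhdsWithin p (Set.Ioc p 1)).NeBot := by
    rw [← mem_closure_iff_nhdsWithin_neBot, closure_Ioc hp1.ne]
    exact ⟨le_refl p, hp.2⟩
  obtain ⟨p₂, hp₂lt, hp₂mem⟩ := (hev2.and self_mem_nhdsWithin).exists
  -- second coordinate
  have hcw2 : ContinuousWithinAt (fun y => T p₂ y) (Set.Ioc 0 1) q :=
    hslice p₂ hp₂mem.2 q ⟨hq0, hq.2⟩
  have hval2 : T p₂ q < b := by
    rw [t_comm hT hp₂mem.2 hq.2]; exact hp₂lt.trans hb₁b
  have hev' : ∀ᶠ y in nhdsWithin q (Set.Ioc 0 1), T p₂ y < b :=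
    hcw2.eventually_lt_const hval2
  have hev2' : ∀ᶠ y in nhdsWithin q (Set.Ioc q 1), T p₂ y < b :=
    hev'.filter_mono (nhdsWithin_mono q (Set.Ioc_subset_Ioc_left hq0.le))
  have hne2 : (nhdsWithin q (Set.Ioc q 1)).NeBot := by
    rw [← mem_closure_iff_nhdsWithin_neBot, closure_Ioc hq1.ne]
    exact ⟨le_refl q, hq.2⟩
  obtain ⟨q₂, hq₂lt, hq₂mem⟩ := (hev2'.and self_mem_nhdsWithin).exists
  refine ⟨p₂, q₂, hp₂mem.1, hq₂mem.1, fun x hx y hy hxu hyv => ?_⟩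
  calc T x y ≤ T p₂ y := t_mono_left hT hy.2 hx.2 hp₂mem.2 hxu.le
    _ = T y p₂ := t_comm hT hp₂mem.2 hy.2
    _ ≤ T q₂ p₂ := t_mono_left hT hp₂mem.2 hy.2 hq₂mem.2 hyv.le
    _ = T p₂ q₂ := t_comm hT hq₂mem.2 hp₂mem.2
    _ < b := hq₂lt

end Aux

theorem tnorm_continuous_of_tensor_preserves_continuity (T L : ℝ≥0∞ → ℝ≥0∞ → ℝ≥0∞)
    (hT : IsLeftContTNorm T) (hL : IsRightContLOp L)
    (h : ∀ f g : ℝ≥0∞ → ℝ≥0∞, IsDDF f → ContinuousOn f (Set.Ioi 0) →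
      IsDDF g → Continuous g → ContinuousOn (tensor L T f g) (Set.Ioi 0)) :
    TNormContinuous T := by
  have hslice : ∀ p : ℝ≥0∞, p ≤ 1 → ContinuousOn (fun x => T p x) (Set.Ioc 0 1) := by
    intro p hp
    have H := h (Fp p) G0 (isDDF_Fp hp) (Fp_contOn p) isDDF_G0 G0_cont
    exact (H.mono Set.Ioc_subset_Ioi_self).congr fun x hx =>
      (tensor_eq hT hL hp hx.1 hx.2).symm
  intro z hz
  have hz1 : z.1 ∈ I01 := hz.1
  have hz2 : z.2 ∈ I01 := hz.2
  rw [ContinuousWithinAt]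
  refine tendsto_order.2 ⟨?_, ?_⟩
  · intro a ha
    obtain ⟨l, m, hl, hm, hbound⟩ := approx_left hT hz1 hz2 ha
    have hopen : IsOpen (Set.Ioi l ×ˢ Set.Ioi m) := isOpen_Ioi.prod isOpen_Ioi
    have hmem : Set.Ioi l ×ˢ Set.Ioi m ∈ nhdsWithin z (I01 ×ˢ I01) :=
      mem_nhdsWithin_of_mem_nhds (hopen.mem_nhds ⟨hl, hm⟩)
    filter_upwards [hmem, self_mem_nhdsWithin] with w hw hws
    exact hbound w.1 hws.1 w.2 hws.2 hw.1 hw.2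
  · intro b hb
    obtain ⟨u, v, hu, hv, hbound⟩ := approx_right hT hslice hz1 hz2 hb
    have hopen : IsOpen (Set.Iio u ×ˢ Set.Iio v) := isOpen_Iio.prod isOpen_Iio
    have hmem : Set.Iio u ×ˢ Set.Iio v ∈ nhdsWithin z (I01 ×ˢ I01) :=
      mem_nhdsWithin_of_mem_nhds (hopen.mem_nhds ⟨hu, hv⟩)
    filter_upwards [hmem, self_mem_nhdsWithin] with w hw hws
    exact hbound w.1 hws.1 w.2 hws.2 hw.1 hw.2
end

section
/- Let T be a continuous t-norm and L a right continuous L-operation. Then (L⊗T)(f,g) is a continuous d.d.f. for all continuous d.d.f.'s f, g if and only if L satisfies (LS): x < x', y < y' imply L(x,y) < L(x',y'). -/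
open ENNReal Set

section Aux

open Filter Topology

variable {T L : ℝ≥0∞ → ℝ≥0∞ → ℝ≥0∞} {f g : ℝ≥0∞ → ℝ≥0∞}

lemma mem_I01_s18 {p : ℝ≥0∞} (h : p ≤ 1) : p ∈ I01 := ⟨zero_le, h⟩

lemma one_mem_I01 : (1 : ℝ≥0∞) ∈ I01 := mem_I01_s18 le_rfl

lemma zero_mem_I01 : (0 : ℝ≥0∞) ∈ I01 := mem_I01_s18 zero_le_one

lemma IsDDF.memI {x : ℝ≥0∞} (hf : IsDDF f) : f x ∈ I01 := mem_I01_s18 (hf.2.1 x)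

lemma T_le_one (hT : IsLeftContTNorm T) {p q : ℝ≥0∞} (hp : p ∈ I01) (hq : q ∈ I01) :
    T p q ≤ 1 := (hT.1 p hp q hq).2

lemma T_mono (hT : IsLeftContTNorm T) {p₁ p₂ q₁ q₂ : ℝ≥0∞} (hp₁ : p₁ ∈ I01) (hp₂ : p₂ ∈ I01)
    (hq₁ : q₁ ∈ I01) (hq₂ : q₂ ∈ I01) (hp : p₁ ≤ p₂) (hq : q₁ ≤ q₂) : T p₁ q₁ ≤ T p₂ q₂ := by
  have h1 : T p₁ q₁ ≤ T p₂ q₁ := hT.2.2.2.2.1 q₁ hq₁ p₁ hp₁ p₂ hp₂ hp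
  have h2 : T p₂ q₁ ≤ T p₂ q₂ := by
    rw [hT.2.1 p₂ hp₂ q₁ hq₁, hT.2.1 p₂ hp₂ q₂ hq₂]
    exact hT.2.2.2.2.1 p₂ hp₂ q₁ hq₁ q₂ hq₂ hq
  exact h1.trans h2

lemma T_one_one (hT : IsLeftContTNorm T) : T 1 1 = 1 := hT.2.2.2.1 1 one_mem_I01

lemma T_zero_right (hT : IsLeftContTNorm T) {p : ℝ≥0∞} (hp : p ∈ I01) : T p 0 = 0 := by
  have h1 : T p 0 ≤ T 1 0 := hT.2.2.2.2.1 0 zero_mem_I01 p hp 1 one_mem_I01 hp.2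
  have h2 : T 1 0 = 0 := by
    rw [hT.2.1 1 one_mem_I01 0 zero_mem_I01]
    exact hT.2.2.2.1 0 zero_mem_I01
  exact le_antisymm (h1.trans (le_of_eq h2)) (zero_le)

lemma T_zero_left (hT : IsLeftContTNorm T) {q : ℝ≥0∞} (hq : q ∈ I01) : T 0 q = 0 := by
  rw [hT.2.1 0 zero_mem_I01 q hq]; exact T_zero_right hT hq

lemma L_mono₂ (hL : IsRightContLOp L) {r₁ r₂ s₁ s₂ : ℝ≥0∞} (hr : r₁ ≤ r₂) (hs : s₁ ≤ s₂) :
    L r₁ s₁ ≤ L r₂ s₂ := by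
  have h1 : L r₁ s₁ ≤ L r₂ s₁ := hL.2.2.2.1 s₁ r₁ r₂ hr
  have h2 : L r₂ s₁ ≤ L r₂ s₂ := by
    rw [hL.1 r₂ s₁, hL.1 r₂ s₂]; exact hL.2.2.2.1 r₂ s₁ s₂ hs
  exact h1.trans h2

/-! ### Basic properties of `tensor` -/

lemma tensor_top : tensor L T f g ⊤ = 1 := if_pos rfl

lemma tensor_of_ne_top {x : ℝ≥0∞} (hx : x ≠ ⊤) :
    tensor L T f g x = ⨆ r, ⨆ s, ⨆ _ : L r s < x, T (f r) (g s) := if_neg hx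

lemma le_tensor {x r s : ℝ≥0∞} (hx : x ≠ ⊤) (h : L r s < x) :
    T (f r) (g s) ≤ tensor L T f g x := by
  rw [tensor_of_ne_top hx]
  calc T (f r) (g s) ≤ ⨆ _ : L r s < x, T (f r) (g s) := le_iSup (fun _ => T (f r) (g s)) h
    _ ≤ ⨆ s', ⨆ _ : L r s' < x, T (f r) (g s') :=
        le_iSup (fun s' => ⨆ _ : L r s' < x, T (f r) (g s')) s
    _ ≤ ⨆ r', ⨆ s', ⨆ _ : L r' s' < x, T (f r') (g s') :=
        le_iSup (fun r' => ⨆ s', ⨆ _ : L r' s' < x, T (f r') (g s')) r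

lemma tensor_le_one (hT : IsLeftContTNorm T) (hf : IsDDF f) (hg : IsDDF g) (x : ℝ≥0∞) :
    tensor L T f g x ≤ 1 := by
  unfold tensor
  split
  · exact le_rfl
  · exact iSup_le fun r => iSup_le fun s => iSup_le fun _ => T_le_one hT hf.memI hg.memI

lemma tensor_mono (hT : IsLeftContTNorm T) (hf : IsDDF f) (hg : IsDDF g) :
    Monotone (tensor L T f g) := by
  intro x y hxy
  by_cases hy : y = ⊤
  · subst hy; rw [tensor_top]; exact tensor_le_one hT hf hg x
  · have hx : x ≠ ⊤ := fun h => hy (top_le_iff.1 (h ▸ hxy))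
    rw [tensor_of_ne_top hx]
    exact iSup_le fun r => iSup_le fun s => iSup_le fun h => le_tensor hy (lt_of_lt_of_le h hxy)

lemma tensor_zero : tensor L T f g 0 = 0 := by
  rw [tensor_of_ne_top (by simp)]
  simp

lemma tensor_biSup (hT : IsLeftContTNorm T) (hf : IsDDF f) (hg : IsDDF g)
    {x : ℝ≥0∞} (hx : x < ⊤) : tensor L T f g x = ⨆ y ∈ Set.Iio x, tensor L T f g y := by
  refine le_antisymm ?_ (iSup₂_le fun y hy => tensor_mono hT hf hg hy.le)
  rw [tensor_of_ne_top hx.ne]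
  refine iSup_le fun r => iSup_le fun s => iSup_le fun h => ?_
  obtain ⟨y, hy1, hy2⟩ := exists_between h
  calc T (f r) (g s) ≤ tensor L T f g y := le_tensor (hy2.trans hx).ne hy1
    _ ≤ ⨆ y ∈ Set.Iio x, tensor L T f g y := le_biSup _ hy2

lemma tensor_isDDF (hT : IsLeftContTNorm T) (hf : IsDDF f) (hg : IsDDF g) :
    IsDDF (tensor L T f g) :=
  ⟨tensor_mono hT hf hg, tensor_le_one hT hf hg, tensor_zero, tensor_top,
    fun _ _ hx => tensor_biSup hT hf hg hx⟩

/-! ### Monotone functions: continuity vs. one-sided sup/inf -/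

lemma eq_biSup_of_cont (hm : Monotone f) (hc : Continuous f) {x : ℝ≥0∞} (hx : 0 < x) :
    f x = ⨆ y ∈ Set.Iio x, f y := by
  have h1 := hm.tendsto_nhdsLT x
  have h2 : Filter.Tendsto f (𝓝[<] x) (𝓝 (f x)) :=
    (hc.tendsto x).mono_left nhdsWithin_le_nhds
  haveI : (𝓝[<] x).NeBot := nhdsWithin_Iio_self_neBot' ⟨0, hx⟩
  rw [tendsto_nhds_unique h2 h1, sSup_image]

lemma isDDF_of_cont (hm : Monotone f) (hle : ∀ x, f x ≤ 1) (h0 : f 0 = 0) (ht : f ⊤ = 1)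
    (hc : Continuous f) : IsDDF f :=
  ⟨hm, hle, h0, ht, fun _ hx _ => eq_biSup_of_cont hm hc hx⟩

lemma continuous_of_mono (hm : Monotone f)
    (hsup : ∀ x : ℝ≥0∞, 0 < x → f x = ⨆ y ∈ Set.Iio x, f y)
    (hinf : ∀ x : ℝ≥0∞, x < ⊤ → f x = ⨅ y ∈ Set.Ioi x, f y) : Continuous f := by
  rw [continuous_iff_continuousAt]
  intro x
  rw [continuousAt_iff_continuous_left_right]
  constructor
  · rcases eq_or_lt_of_le (zero_le : 0 ≤ x) with h | h
    · rw [← h, show Set.Iic (0 : ℝ≥0∞) = {0} from Set.Iic_bot]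
      exact continuousWithinAt_singleton
    · have h1 := hm.tendsto_nhdsLT x
      rw [sSup_image, ← hsup x h] at h1
      rw [← Set.Iio_insert]
      exact continuousWithinAt_insert_self.2 h1
  · rcases eq_or_lt_of_le (le_top (a := x)) with h | h
    · rw [h, show Set.Ici (⊤ : ℝ≥0∞) = {⊤} from Set.Ici_top]
      exact continuousWithinAt_singleton
    · have h1 := hm.tendsto_nhdsGT x
      rw [sInf_image, ← hinf x h] at h1
      rw [← Set.Ioi_insert]
      exact continuousWithinAt_insert_self.2 h1

/-! ### The ramp functions used in the necessity proof -/

lemma ramp_spec (x k : ℝ≥0∞) (hx : x ≠ ⊤) (hk0 : k ≠ 0) (hkt : k ≠ ⊤) :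
    (IsDDF (fun r => ((r - x) * k) ⊓ 1) ∧ Continuous (fun r => ((r - x) * k) ⊓ 1)) ∧
      (∀ r, r ≤ x → ((r - x) * k) ⊓ 1 = 0) := by
  have hc : Continuous (fun r : ℝ≥0∞ => ((r - x) * k) ⊓ 1) :=
    ((ENNReal.continuous_mul_const hkt).comp (ENNReal.continuous_sub_right x)).min
      continuous_const
  have hm : Monotone (fun r : ℝ≥0∞ => ((r - x) * k) ⊓ 1) := fun a b hab =>
    inf_le_inf (mul_le_mul_left (tsub_le_tsub_right hab x) k) le_rfl
  have h0 : ∀ r, r ≤ x → ((r - x) * k) ⊓ 1 = 0 := by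
    intro r hr
    rw [tsub_eq_zero_of_le hr, zero_mul]
    simp
  refine ⟨⟨isDDF_of_cont hm (fun r => inf_le_right) (h0 0 (zero_le : 0 ≤ x)) ?_ hc, hc⟩, h0⟩
  rw [ENNReal.top_sub hx, ENNReal.top_mul hk0]
  simp

end Aux

section MainProof

open Filter Topology

theorem tensor_preserves_continuous_ddf_iff_LS (T L : ℝ≥0∞ → ℝ≥0∞ → ℝ≥0∞)
    (hT : IsLeftContTNorm T) (hTc : TNormContinuous T) (hL : IsRightContLOp L) :
    (∀ f g : ℝ≥0∞ → ℝ≥0∞, IsDDF f → Continuous f → IsDDF g → Continuous g →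
      IsDDF (tensor L T f g) ∧ Continuous (tensor L T f g)) ↔
    (∀ x x' y y' : ℝ≥0∞, x < x' → y < y' → L x y < L x' y') := by
  constructor
  · -- preservation → (LS)
    intro hpres x x' y y' hx hy
    by_contra hcon
    push_neg at hcon
    -- so L x y = L x' y' =: c
    have hle : L x y ≤ L x' y' := L_mono₂ hL hx.le hy.le
    have hc : L x y = L x' y' := le_antisymm hle hcon
    set c := L x y with hcdef
    have hxt : x ≠ ⊤ := hx.ne_top
    have hyt : y ≠ ⊤ := hy.ne_top
    by_cases hctop : c = ⊤
    · -- case c = ⊤ : tensor jumps at ⊤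
      obtain ⟨⟨hfd, hfc⟩, hf0⟩ := ramp_spec x 1 hxt one_ne_zero one_ne_top
      obtain ⟨⟨hgd, hgc⟩, hg0⟩ := ramp_spec y 1 hyt one_ne_zero one_ne_top
      set f : ℝ≥0∞ → ℝ≥0∞ := fun r => ((r - x) * 1) ⊓ 1 with hfdef
      set g : ℝ≥0∞ → ℝ≥0∞ := fun s => ((s - y) * 1) ⊓ 1 with hgdef
      obtain ⟨hτd, hτc⟩ := hpres f g hfd hfc hgd hgc
      have hzero : ∀ z : ℝ≥0∞, z < ⊤ → tensor L T f g z = 0 := by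
        intro z hz
        rw [tensor_of_ne_top hz.ne]
        refine le_antisymm (iSup_le fun r => iSup_le fun s => iSup_le fun h => ?_) (zero_le)
        rcases le_or_gt r x with hr | hr
        · rw [show f r = 0 from hf0 r hr]
          rw [T_zero_left hT hgd.memI]
        rcases le_or_gt s y with hs | hs
        · rw [show g s = 0 from hg0 s hs]
          rw [T_zero_right hT hfd.memI]
        · exfalso
          have : c ≤ L r s := L_mono₂ hL hr.le hs.le
          rw [hctop] at this
          exact absurd (lt_of_le_of_lt this h) (by simp)
      haveI : (𝓝[<] (⊤ : ℝ≥0∞)).NeBot := nhdsWithin_Iio_self_neBot' ⟨0, by simp⟩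
      have h1 : Tendsto (tensor L T f g) (𝓝[<] ⊤) (𝓝 1) := by
        have : Tendsto (tensor L T f g) (𝓝[<] ⊤) (𝓝 (tensor L T f g ⊤)) :=
          (hτc.tendsto ⊤).mono_left nhdsWithin_le_nhds
        rwa [tensor_top] at this
      have h2 : Tendsto (tensor L T f g) (𝓝[<] ⊤) (𝓝 0) := by
        refine Tendsto.congr' ?_ tendsto_const_nhds
        exact eventually_mem_nhdsWithin.mono fun z hz => (hzero z hz).symm
      exact one_ne_zero (tendsto_nhds_unique h1 h2)
    · -- case c < ⊤ : tensor jumps at c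
      have hct : c < ⊤ := lt_top_iff_ne_top.2 hctop
      have hx't : x' ≠ ⊤ := by
        intro h
        apply hctop
        rw [hc, h]
        refine top_le_iff.1 ?_
        calc (⊤ : ℝ≥0∞) = L ⊤ 0 := (hL.2.2.1 ⊤).symm
          _ ≤ L ⊤ y' := L_mono₂ hL le_rfl (zero_le)
      have hy't : y' ≠ ⊤ := by
        intro h
        apply hctop
        rw [hc, h]
        refine top_le_iff.1 ?_
        calc (⊤ : ℝ≥0∞) = L ⊤ 0 := (hL.2.2.1 ⊤).symm
          _ ≤ L x' ⊤ := by rw [hL.1 x' ⊤]; exact L_mono₂ hL le_rfl (zero_le)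
      have hdx0 : x' - x ≠ 0 := by
        rw [Ne, tsub_eq_zero_iff_le]; exact not_le.2 hx
      have hdxt : x' - x ≠ ⊤ := ENNReal.sub_ne_top hx't
      have hdy0 : y' - y ≠ 0 := by
        rw [Ne, tsub_eq_zero_iff_le]; exact not_le.2 hy
      have hdyt : y' - y ≠ ⊤ := ENNReal.sub_ne_top hy't
      obtain ⟨⟨hfd, hfc⟩, hf0⟩ := ramp_spec x (x' - x)⁻¹ hxt (ENNReal.inv_ne_zero.2 hdxt)
        (ENNReal.inv_ne_top.2 hdx0)
      obtain ⟨⟨hgd, hgc⟩, hg0⟩ := ramp_spec y (y' - y)⁻¹ hyt (ENNReal.inv_ne_zero.2 hdyt)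
        (ENNReal.inv_ne_top.2 hdy0)
      set f : ℝ≥0∞ → ℝ≥0∞ := fun r => ((r - x) * (x' - x)⁻¹) ⊓ 1 with hfdef
      set g : ℝ≥0∞ → ℝ≥0∞ := fun s => ((s - y) * (y' - y)⁻¹) ⊓ 1 with hgdef
      have hfx' : f x' = 1 := by
        rw [hfdef]
        simp only
        rw [ENNReal.mul_inv_cancel hdx0 hdxt]
        simp
      have hgy' : g y' = 1 := by
        rw [hgdef]
        simp only
        rw [ENNReal.mul_inv_cancel hdy0 hdyt]
        simp
      obtain ⟨hτd, hτc⟩ := hpres f g hfd hfc hgd hgc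
      have hzero : tensor L T f g c = 0 := by
        rw [tensor_of_ne_top hctop]
        refine le_antisymm (iSup_le fun r => iSup_le fun s => iSup_le fun h => ?_) (zero_le)
        rcases le_or_gt r x with hr | hr
        · rw [show f r = 0 from hf0 r hr]
          rw [T_zero_left hT hgd.memI]
        rcases le_or_gt s y with hs | hs
        · rw [show g s = 0 from hg0 s hs]
          rw [T_zero_right hT hfd.memI]
        · exact absurd (lt_of_le_of_lt (L_mono₂ hL hr.le hs.le) h) (lt_irrefl c)
      have hone : ∀ z : ℝ≥0∞, c < z → tensor L T f g z = 1 := by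
        intro z hz
        by_cases hzt : z = ⊤
        · rw [hzt, tensor_top]
        refine le_antisymm (tensor_le_one hT hfd hgd z) ?_
        have : L x' y' < z := hc ▸ hz
        have h1 : T (f x') (g y') ≤ tensor L T f g z := le_tensor hzt this
        rwa [hfx', hgy', T_one_one hT] at h1
      haveI : (𝓝[>] c).NeBot := nhdsGT_neBot_of_exists_gt ⟨⊤, hct⟩
      have h1 : Tendsto (tensor L T f g) (𝓝[>] c) (𝓝 0) := by
        have : Tendsto (tensor L T f g) (𝓝[>] c) (𝓝 (tensor L T f g c)) :=
          (hτc.tendsto c).mono_left nhdsWithin_le_nhds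
        rwa [hzero] at this
      have h2 : Tendsto (tensor L T f g) (𝓝[>] c) (𝓝 1) := by
        refine Tendsto.congr' ?_ tendsto_const_nhds
        exact eventually_mem_nhdsWithin.mono fun z hz => (hone z hz).symm
      exact one_ne_zero ((tendsto_nhds_unique h2 h1))
  · -- (LS) → preservation
    intro hLS f g hf hcf hg hcg
    -- the map Φ (r,s) = T (f r) (g s) is continuous
    have hΦ : Continuous (fun p : ℝ≥0∞ × ℝ≥0∞ => T (f p.1) (g p.2)) := by
      have hmap : Continuous (fun p : ℝ≥0∞ × ℝ≥0∞ => ((f p.1, g p.2) : ℝ≥0∞ × ℝ≥0∞)) :=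
        (hcf.comp continuous_fst).prodMk (hcg.comp continuous_snd)
      exact hTc.comp_continuous hmap fun p => Set.mk_mem_prod hf.memI hg.memI
    have hddf : IsDDF (tensor L T f g) := tensor_isDDF hT hf hg
    have hmono : Monotone (tensor L T f g) := hddf.1
    -- left continuity at ⊤
    have hsup_top : tensor L T f g ⊤ = ⨆ y ∈ Set.Iio (⊤ : ℝ≥0∞), tensor L T f g y := by
      rw [tensor_top]
      refine le_antisymm ?_ (iSup₂_le fun y _ => tensor_le_one hT hf hg y)
      have key : ∀ p' ∈ Set.Iio (1 : ℝ≥0∞), ∀ q' ∈ Set.Iio (1 : ℝ≥0∞),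
          T q' p' ≤ ⨆ y ∈ Set.Iio (⊤ : ℝ≥0∞), tensor L T f g y := by
        intro p' hp' q' hq'
        have hp'I : p' ∈ I01 := mem_I01_s18 hp'.le
        have hq'I : q' ∈ I01 := mem_I01_s18 hq'.le
        have hfs : f ⊤ = ⨆ r ∈ Set.Iio (⊤ : ℝ≥0∞), f r := eq_biSup_of_cont hf.1 hcf (by simp)
        have hgs : g ⊤ = ⨆ s ∈ Set.Iio (⊤ : ℝ≥0∞), g s := eq_biSup_of_cont hg.1 hcg (by simp)
        have hq'lt : q' < ⨆ r ∈ Set.Iio (⊤ : ℝ≥0∞), f r := by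
          rw [← hfs, hf.2.2.2.1]; exact hq'
        have hp'lt : p' < ⨆ s ∈ Set.Iio (⊤ : ℝ≥0∞), g s := by
          rw [← hgs, hg.2.2.2.1]; exact hp'
        obtain ⟨r, hrlt⟩ := lt_iSup_iff.1 hq'lt
        obtain ⟨hr, hrq⟩ := lt_iSup_iff.1 hrlt
        obtain ⟨s, hslt⟩ := lt_iSup_iff.1 hp'lt
        obtain ⟨hs, hsp⟩ := lt_iSup_iff.1 hslt
        have hLtop : L r s < ⊤ := lt_of_lt_of_le (hLS r ⊤ s ⊤ hr hs) le_top
        obtain ⟨z, hz1, hz2⟩ := exists_between hLtop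
        calc T q' p' ≤ T (f r) (g s) := T_mono hT hq'I hf.memI hp'I hg.memI hrq.le hsp.le
          _ ≤ tensor L T f g z := le_tensor hz2.ne hz1
          _ ≤ ⨆ y ∈ Set.Iio (⊤ : ℝ≥0∞), tensor L T f g y := le_biSup _ hz2
      have h1 : (1 : ℝ≥0∞) = ⨆ p' ∈ Set.Iio (1 : ℝ≥0∞), T p' 1 := by
        conv_lhs => rw [← T_one_one hT]
        exact hT.2.2.2.2.2 1 one_mem_I01 1 one_mem_I01 zero_lt_one
      rw [h1]
      refine iSup₂_le fun p' hp' => ?_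
      have hp'I : p' ∈ I01 := mem_I01_s18 hp'.le
      have h2 : T p' 1 = ⨆ q' ∈ Set.Iio (1 : ℝ≥0∞), T q' p' := by
        rw [hT.2.1 p' hp'I 1 one_mem_I01]
        exact hT.2.2.2.2.2 p' hp'I 1 one_mem_I01 zero_lt_one
      rw [h2]
      exact iSup₂_le fun q' hq' => key p' hp' q' hq'
    -- right continuity
    have hinf : ∀ x : ℝ≥0∞, x < ⊤ →
        tensor L T f g x = ⨅ y ∈ Set.Ioi x, tensor L T f g y := by
      intro x hx
      refine le_antisymm (le_iInf₂ fun y hy => hmono hy.le) ?_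
      by_contra hcon
      push_neg at hcon
      obtain ⟨t, ht1, ht2⟩ := exists_between hcon
      -- a sequence yₙ ↓ x
      set y : ℕ → ℝ≥0∞ := fun n => x + ((n : ℝ≥0∞) + 1)⁻¹ with hydef
      have hy_gt : ∀ n, x < y n := fun n =>
        ENNReal.lt_add_right hx.ne
          (ENNReal.inv_ne_zero.2 (ENNReal.add_ne_top.2 ⟨ENNReal.natCast_ne_top n, one_ne_top⟩))
      have hy_ne : ∀ n, y n ≠ ⊤ := fun n =>
        ENNReal.add_ne_top.2 ⟨hx.ne, ENNReal.inv_ne_top.2 (by simp)⟩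
      have hy_lim : Tendsto y atTop (𝓝 x) := by
        have h0 : Tendsto (fun n : ℕ => ((n : ℝ≥0∞) + 1)⁻¹) atTop (𝓝 0) := by
          refine tendsto_of_tendsto_of_tendsto_of_le_of_le tendsto_const_nhds
            ENNReal.tendsto_inv_nat_nhds_zero (fun n => zero_le) (fun n => ?_)
          exact ENNReal.inv_le_inv' (le_add_right le_rfl)
        have := Tendsto.const_add x h0
        rwa [add_zero] at this
      -- for each n pick (rₙ, sₙ)
      have hpick : ∀ n : ℕ, ∃ r s : ℝ≥0∞, L r s < y n ∧ t < T (f r) (g s) := by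
        intro n
        have hlt : t < tensor L T f g (y n) :=
          lt_of_lt_of_le ht2 (iInf₂_le (y n) (hy_gt n))
        rw [tensor_of_ne_top (hy_ne n)] at hlt
        obtain ⟨r, hr⟩ := lt_iSup_iff.1 hlt
        obtain ⟨s, hs⟩ := lt_iSup_iff.1 hr
        obtain ⟨hrs, hlt'⟩ := lt_iSup_iff.1 hs
        exact ⟨r, s, hrs, hlt'⟩
      choose r s hrs hts using hpick
      -- compactness: extract a convergent subsequence of (rₙ, sₙ)
      obtain ⟨a, -, φ, hφ, hconv⟩ :=
        isCompact_univ.tendsto_subseq (x := fun n => ((r n, s n) : ℝ≥0∞ × ℝ≥0∞))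
          (fun n => Set.mem_univ _)
      have hconv_r : Tendsto (fun n => r (φ n)) atTop (𝓝 a.1) :=
        (continuous_fst.tendsto a).comp hconv
      have hconv_s : Tendsto (fun n => s (φ n)) atTop (𝓝 a.2) :=
        (continuous_snd.tendsto a).comp hconv
      -- Claim 1 : t ≤ Φ a
      have hclaim1 : t ≤ T (f a.1) (g a.2) := by
        have htend : Tendsto (fun n => T (f (r (φ n))) (g (s (φ n)))) atTop
            (𝓝 (T (f a.1) (g a.2))) := (hΦ.tendsto a).comp hconv
        exact ge_of_tendsto htend (Eventually.of_forall fun n => (hts (φ n)).le)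
      -- Claim 2 : every point strictly below a is mapped below x by L
      have hclaim2 : ∀ r' < a.1, ∀ s' < a.2, L r' s' < x := by
        intro r' hr' s' hs'
        obtain ⟨r'', hr''1, hr''2⟩ := exists_between hr'
        obtain ⟨s'', hs''1, hs''2⟩ := exists_between hs'
        have hev_r : ∀ᶠ n in atTop, r (φ n) ∈ Set.Ioi r'' :=
          hconv_r.eventually_mem (isOpen_Ioi.mem_nhds hr''2)
        have hev_s : ∀ᶠ n in atTop, s (φ n) ∈ Set.Ioi s'' :=
          hconv_s.eventually_mem (isOpen_Ioi.mem_nhds hs''2)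
        have hev : ∀ᶠ n in atTop, L r'' s'' ≤ y (φ n) := by
          filter_upwards [hev_r, hev_s] with n hn1 hn2
          exact ((hLS r'' (r (φ n)) s'' (s (φ n)) hn1 hn2).trans (hrs (φ n))).le
        have hyle : L r'' s'' ≤ x :=
          ge_of_tendsto (hy_lim.comp hφ.tendsto_atTop) hev
        exact lt_of_lt_of_le (hLS r' r'' s' s'' hr''1 hs''1) hyle
      -- Claim 3 : Φ a ≤ tensor x
      have hclaim3 : T (f a.1) (g a.2) ≤ tensor L T f g x := by
        rcases eq_or_lt_of_le (zero_le : 0 ≤ a.1) with h1 | h1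
        · rw [← h1, hf.2.2.1, T_zero_left hT hg.memI]
          exact zero_le
        rcases eq_or_lt_of_le (zero_le : 0 ≤ a.2) with h2 | h2
        · rw [← h2, hg.2.2.1, T_zero_right hT hf.memI]
          exact zero_le
        haveI : (𝓝[<] a.1).NeBot := nhdsWithin_Iio_self_neBot' ⟨0, h1⟩
        haveI : (𝓝[<] a.2).NeBot := nhdsWithin_Iio_self_neBot' ⟨0, h2⟩
        have htend : Tendsto (fun p : ℝ≥0∞ × ℝ≥0∞ => T (f p.1) (g p.2))
            ((𝓝[<] a.1) ×ˢ (𝓝[<] a.2)) (𝓝 (T (f a.1) (g a.2))) := by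
          refine (hΦ.tendsto a).comp ?_
          rw [nhds_prod_eq]
          exact Filter.prod_mono nhdsWithin_le_nhds nhdsWithin_le_nhds
        refine le_of_tendsto htend ?_
        have hmem : Set.Iio a.1 ×ˢ Set.Iio a.2 ∈ (𝓝[<] a.1) ×ˢ (𝓝[<] a.2) :=
          Filter.prod_mem_prod self_mem_nhdsWithin self_mem_nhdsWithin
        refine Filter.eventually_of_mem hmem fun p hp => ?_
        exact le_tensor hx.ne (hclaim2 p.1 hp.1 p.2 hp.2)
      exact absurd (hclaim1.trans hclaim3) (not_le.2 ht1)
    refine ⟨hddf, ?_⟩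
    refine continuous_of_mono hmono ?_ hinf
    intro x hx
    rcases eq_or_lt_of_le (le_top (a := x)) with h | h
    · rw [h]; exact hsup_top
    · exact tensor_biSup hT hf hg h

end MainProof
end
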